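/- arXiv:2305.18581 — 2 statements merged into one kernel-verified Lean document; each statement's English description precedes it below -/
import Mathlib

section
/- Let X be a 1-generic set and let {C_i = A_i \ B_i} be a uniformly computable sequence of differences of c.e. sets (A_i, B_i uniformly c.e.). If there is an X-computable function f with f(i) ∈ A_i \ B_i for all i, then there is a computable function g with g(i) ∈ A_i \ B_i for all i. -/
open Classical in
/-- Characteristic function of a set of naturals. -/
noncomputable def chi (A : Set ℕ) : ℕ → ℕ := fun n => if n ∈ A then 1 else 0

/-- Partial functions computable relative to an oracle `O : ℕ → ℕ`. -/
inductive OracleRecursiveIn (O : ℕ → ℕ) : (ℕ →. ℕ) → Prop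
  | zero : OracleRecursiveIn O (pure 0)
  | succ : OracleRecursiveIn O Nat.succ
  | left : OracleRecursiveIn O ↑fun n : ℕ => n.unpair.1
  | right : OracleRecursiveIn O ↑fun n : ℕ => n.unpair.2
  | oracle : OracleRecursiveIn O ↑O
  | pair {f g} : OracleRecursiveIn O f → OracleRecursiveIn O g →
      OracleRecursiveIn O fun n => Nat.pair <$> f n <*> g n
  | comp {f g} : OracleRecursiveIn O f → OracleRecursiveIn O g →
      OracleRecursiveIn O fun n => g n >>= f
  | prec {f g} : OracleRecursiveIn O f → OracleRecursiveIn O g →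
      OracleRecursiveIn O (Nat.unpaired fun a n =>
        n.rec (f a) fun y IH => do let i ← IH; g (Nat.pair a (Nat.pair y i)))
  | rfind {f} : OracleRecursiveIn O f →
      OracleRecursiveIn O fun a => Nat.rfind fun n => (fun m => m = 0) <$> f (Nat.pair a n)

/-- Turing reducibility between sets of naturals: `A ≤_T B`. -/
def SetTuringRed (A B : Set ℕ) : Prop := OracleRecursiveIn (chi B) ↑(chi A)

/-- `A` is computably enumerable. -/
def CE (A : Set ℕ) : Prop := ∃ f : ℕ →. ℕ, Nat.Partrec f ∧ ∀ n, n ∈ A ↔ (f n).Dom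

/-- `A` is c.e. relative to the oracle `O`. -/
def CEIn (O : ℕ → ℕ) (A : Set ℕ) : Prop :=
  ∃ f : ℕ →. ℕ, OracleRecursiveIn O f ∧ ∀ n, n ∈ A ↔ (f n).Dom

/-- A uniformly c.e. sequence of sets. -/
def UnifCE (A : ℕ → Set ℕ) : Prop :=
  ∃ f : ℕ →. ℕ, Nat.Partrec f ∧ ∀ i x, x ∈ A i ↔ (f (Nat.pair i x)).Dom

/-- `W` is a c.e. set of binary strings. -/
def CEString (W : Set (List Bool)) : Prop :=
  ∃ f : ℕ →. ℕ, Nat.Partrec f ∧ ∀ σ : List Bool, σ ∈ W ↔ (f (Encodable.encode σ)).Dom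

/-- `σ` is an initial segment of the characteristic function of `X`. -/
def PrefixOf (σ : List Bool) (X : Set ℕ) : Prop :=
  ∀ i : Fin σ.length, (σ.get i = true ↔ (i : ℕ) ∈ X)

/-- `X` is 1-generic. -/
def OneGeneric (X : Set ℕ) : Prop :=
  ∀ W : Set (List Bool), CEString W →
    ∃ σ : List Bool, PrefixOf σ X ∧ (σ ∈ W ∨ ∀ τ : List Bool, σ <+: τ → τ ∉ W)


set_option maxHeartbeats 1000000

lemma prefixOf_nil (X : Set ℕ) : PrefixOf [] X := fun i => i.elim0

open Classical in
noncomputable def Xpref (X : Set ℕ) (k : ℕ) : List Bool :=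
  (List.range k).map fun i => decide (i ∈ X)

lemma Xpref_length (X : Set ℕ) (k : ℕ) : (Xpref X k).length = k := by
  simp [Xpref]

open Classical in
lemma Xpref_get (X : Set ℕ) (k : ℕ) (i : Fin (Xpref X k).length) :
    (Xpref X k).get i = decide ((i : ℕ) ∈ X) := by
  classical
  rw [List.get_eq_getElem]; simp [Xpref]

open Classical in
lemma Xpref_getq (X : Set ℕ) (k n : ℕ) (h : n < k) :
    (Xpref X k)[n]? = some (decide (n ∈ X)) := by
  have hn : n < (Xpref X k).length := by rw [Xpref_length]; exact h
  rw [List.getElem?_eq_getElem hn]; simp [Xpref]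

lemma Xpref_prefixOf (X : Set ℕ) (k : ℕ) : PrefixOf (Xpref X k) X := by
  intro i
  rw [Xpref_get]
  simp

lemma prefixOf_comparable {σ τ : List Bool} {X : Set ℕ} (h1 : PrefixOf σ X) (h2 : PrefixOf τ X) :
    σ <+: τ ∨ τ <+: σ := by
  classical
  have key : ∀ σ τ : List Bool, PrefixOf σ X → PrefixOf τ X → σ.length ≤ τ.length → σ <+: τ := by
    intro σ τ h1 h2 hlen
    have : σ = τ.take σ.length := by
      apply List.ext_get
      · simp [hlen]
      · intro n hn hn'
        have hnσ : n < σ.length := hn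
        have hnτ : n < τ.length := lt_of_lt_of_le hnσ hlen
        simp only [List.get_eq_getElem, List.getElem_take]
        have e1 := h1 ⟨n, hnσ⟩
        have e2 := h2 ⟨n, hnτ⟩
        simp only at e1 e2
        by_cases hx : n ∈ X
        · simp only [List.get_eq_getElem] at *
          rw [e1.2 hx, e2.2 hx]
        · simp only [List.get_eq_getElem] at *
          cases hσ : σ[n] <;> cases hτ : τ[n]'hnτ <;> simp_all
    rw [this]
    exact List.take_prefix _ _
  rcases le_total σ.length τ.length with h | h
  · exact Or.inl (key σ τ h1 h2 h)
  · exact Or.inr (key τ σ h2 h1 h)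

lemma prefixOf_union {σ τ : List Bool} {X : Set ℕ} (h1 : PrefixOf σ X) (h2 : PrefixOf τ X) :
    ∃ ρ, PrefixOf ρ X ∧ σ <+: ρ ∧ τ <+: ρ := by
  rcases prefixOf_comparable h1 h2 with h | h
  · exact ⟨τ, h2, h, List.prefix_refl τ⟩
  · exact ⟨σ, h1, List.prefix_refl σ, h⟩

lemma prefixOf_of_prefix {σ τ : List Bool} {X : Set ℕ} (h : PrefixOf τ X) (hp : σ <+: τ) :
    PrefixOf σ X := by
  intro i
  have hlen := hp.length_le
  have hi : (i : ℕ) < τ.length := lt_of_lt_of_le i.isLt hlen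
  have := h ⟨i, hi⟩
  obtain ⟨t, rfl⟩ := hp
  simpa [List.get_eq_getElem, List.getElem_append, i.isLt] using this

lemma prefixOf_chain_max {X : Set ℕ} (s : ℕ → List Bool) :
    ∀ k, (∀ m, m ≤ k → PrefixOf (s m) X) →
      ∃ σ, PrefixOf σ X ∧ ∀ m, m ≤ k → s m <+: σ := by
  intro k
  induction k with
  | zero =>
    intro h
    exact ⟨s 0, h 0 le_rfl, fun m hm => by simp [Nat.le_zero.mp hm]⟩
  | succ k ih =>
    intro h
    obtain ⟨σ, hσ, hall⟩ := ih (fun m hm => h m (hm.trans k.le_succ))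
    obtain ⟨ρ, hρ, h1, h2⟩ := prefixOf_union hσ (h (k+1) le_rfl)
    refine ⟨ρ, hρ, fun m hm => ?_⟩
    by_cases h' : m ≤ k
    · exact (hall m h').trans h1
    · have : m = k + 1 := by omega
      exact this ▸ h2

lemma get?_of_prefix {σ τ : List Bool} (h : σ <+: τ) {n : ℕ} {b : Bool}
    (hb : σ[n]? = some b) : τ[n]? = some b := by
  obtain ⟨t, rfl⟩ := h
  have hn : n < σ.length := List.getElem?_eq_some_iff.mp hb |>.1
  rw [List.getElem?_append_left hn]
  exact hb

lemma mem_bind_pfun {a : Part ℕ} {g : ℕ →. ℕ} {y : ℕ} :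
    y ∈ a >>= g ↔ ∃ z ∈ a, y ∈ g z := Part.mem_bind_iff

lemma mem_pair_seq {a b : Part ℕ} {y} :
    y ∈ (Nat.pair <$> a <*> b) ↔ ∃ u ∈ a, ∃ v ∈ b, Nat.pair u v = y := by
  simp [Seq.seq, Part.mem_bind_iff, Part.mem_map_iff]

open Classical in
theorem use_lemma (X : Set ℕ) {fp : ℕ →. ℕ} (hrec : OracleRecursiveIn (chi X) fp) :
    ∃ F : List Bool → ℕ →. ℕ, Partrec₂ F ∧
      (∀ σ τ, σ <+: τ → ∀ n y, y ∈ F σ n → y ∈ F τ n) ∧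
      (∀ σ, PrefixOf σ X → ∀ n y, y ∈ F σ n → y ∈ fp n) ∧
      (∀ n y, y ∈ fp n → ∃ σ, PrefixOf σ X ∧ y ∈ F σ n) := by
  induction hrec with
  | zero =>
      refine ⟨fun _ _ => pure 0, Partrec.const' (Part.some 0), ?_, ?_, ?_⟩
      · exact fun σ τ _ n y hy => hy
      · exact fun σ _ n y hy => hy
      · exact fun n y hy => ⟨[], prefixOf_nil X, hy⟩
  | succ =>
      refine ⟨fun _ n => pure n.succ, ?_, ?_, ?_, ?_⟩
      · exact ((Computable.succ.comp Computable.snd).partrec).of_eq fun p => by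
          simp [PFun.coe_val]
      · exact fun σ τ _ n y hy => hy
      · intro σ _ n y hy; simpa [PFun.coe_val] using hy
      · intro n y hy; exact ⟨[], prefixOf_nil X, by simpa [PFun.coe_val] using hy⟩
  | left =>
      refine ⟨fun _ n => pure n.unpair.1, ?_, ?_, ?_, ?_⟩
      · exact ((Computable.fst.comp (Computable.unpair.comp Computable.snd)).partrec).of_eq
          fun p => by simp [PFun.coe_val]
      · exact fun σ τ _ n y hy => hy
      · intro σ _ n y hy; simpa [PFun.coe_val] using hy
      · intro n y hy; exact ⟨[], prefixOf_nil X, by simpa [PFun.coe_val] using hy⟩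
  | right =>
      refine ⟨fun _ n => pure n.unpair.2, ?_, ?_, ?_, ?_⟩
      · exact ((Computable.snd.comp (Computable.unpair.comp Computable.snd)).partrec).of_eq
          fun p => by simp [PFun.coe_val]
      · exact fun σ τ _ n y hy => hy
      · intro σ _ n y hy; simpa [PFun.coe_val] using hy
      · intro n y hy; exact ⟨[], prefixOf_nil X, by simpa [PFun.coe_val] using hy⟩
  | oracle =>
      refine ⟨fun σ n => (((σ[n]?).map fun b => cond b 1 0 : Option ℕ) : Part ℕ), ?_, ?_, ?_, ?_⟩
      · exact Computable.ofOption
          (Computable.option_map (Computable.list_getElem?.comp Computable.fst Computable.snd)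
            (Computable.cond Computable.snd (Computable.const 1) (Computable.const 0)))
      · intro σ τ hp n y hy
        rw [Part.mem_coe, Option.mem_def, Option.map_eq_some_iff] at hy ⊢
        obtain ⟨b, hb, rfl⟩ := hy
        exact ⟨b, get?_of_prefix hp hb, rfl⟩
      · intro σ hσ n y hy
        rw [Part.mem_coe, Option.mem_def, Option.map_eq_some_iff] at hy
        obtain ⟨b, hb, rfl⟩ := hy
        have hn : n < σ.length := (List.getElem?_eq_some_iff.mp hb).1
        have hget : σ.get ⟨n, hn⟩ = b := (List.getElem?_eq_some_iff.mp hb).2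
        have hiff := hσ ⟨n, hn⟩
        rw [hget] at hiff
        simp only [PFun.coe_val, Part.mem_some_iff, chi]
        by_cases hx : n ∈ X
        · have hb' : b = true := hiff.mpr hx
          simp [hx, hb']
        · have hb' : b = false := by
            cases b
            · rfl
            · exact absurd (hiff.mp rfl) hx
          simp [hx, hb']
      · intro n y hy
        simp only [PFun.coe_val, Part.mem_some_iff] at hy
        refine ⟨Xpref X (n+1), Xpref_prefixOf X (n+1), ?_⟩
        rw [Part.mem_coe, Option.mem_def, Option.map_eq_some_iff]
        refine ⟨decide (n ∈ X), Xpref_getq X (n+1) n (Nat.lt_succ_self n), ?_⟩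
        subst hy
        by_cases hx : n ∈ X
        · rw [decide_eq_true hx]; simp [chi, hx]
        · rw [decide_eq_false hx]; simp [chi, hx]
  | @pair f g _ _ ihf ihg =>
      obtain ⟨F, hFc, hFm, hFs, hFw⟩ := ihf
      obtain ⟨G, hGc, hGm, hGs, hGw⟩ := ihg
      refine ⟨fun σ n => Nat.pair <$> F σ n <*> G σ n, ?_, ?_, ?_, ?_⟩
      · have h1 : Partrec₂ fun (p : List Bool × ℕ) (u : ℕ) =>
            (G p.1 p.2).map fun v => Nat.pair u v :=
          Partrec.map
            (Partrec₂.comp hGc (Computable.fst.comp Computable.fst)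
              (Computable.snd.comp Computable.fst))
            (Primrec₂.natPair.to_comp.comp (Computable.snd.comp Computable.fst)
              Computable.snd)
        refine (Partrec.bind hFc h1).of_eq fun p => Part.ext fun z => ?_
        rw [mem_pair_seq]
        simp only [Part.mem_bind_iff, Part.mem_map_iff]
      · intro σ τ hp n y hy
        rw [mem_pair_seq] at hy ⊢
        obtain ⟨u, hu, v, hv, rfl⟩ := hy
        exact ⟨u, hFm _ _ hp _ _ hu, v, hGm _ _ hp _ _ hv, rfl⟩
      · intro σ hσ n y hy
        rw [mem_pair_seq] at hy ⊢
        obtain ⟨u, hu, v, hv, rfl⟩ := hy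
        exact ⟨u, hFs _ hσ _ _ hu, v, hGs _ hσ _ _ hv, rfl⟩
      · intro n y hy
        rw [mem_pair_seq] at hy
        obtain ⟨u, hu, v, hv, rfl⟩ := hy
        obtain ⟨σ1, hσ1, hu1⟩ := hFw _ _ hu
        obtain ⟨σ2, hσ2, hv2⟩ := hGw _ _ hv
        obtain ⟨ρ, hρ, l1, l2⟩ := prefixOf_union hσ1 hσ2
        refine ⟨ρ, hρ, ?_⟩
        rw [mem_pair_seq]
        exact ⟨u, hFm _ _ l1 _ _ hu1, v, hGm _ _ l2 _ _ hv2, rfl⟩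
  | @comp f g _ _ ihf ihg =>
      obtain ⟨F, hFc, hFm, hFs, hFw⟩ := ihf
      obtain ⟨G, hGc, hGm, hGs, hGw⟩ := ihg
      refine ⟨fun σ n => G σ n >>= F σ, ?_, ?_, ?_, ?_⟩
      · have h2 : Partrec₂ fun (p : List Bool × ℕ) (z : ℕ) => F p.1 z :=
          Partrec₂.comp hFc (Computable.fst.comp Computable.fst) Computable.snd
        exact (Partrec.bind hGc h2).of_eq fun p => rfl
      · intro σ τ hp n y hy
        simp only [mem_bind_pfun] at hy ⊢
        obtain ⟨z, hz, hy⟩ := hy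
        exact ⟨z, hGm _ _ hp _ _ hz, hFm _ _ hp _ _ hy⟩
      · intro σ hσ n y hy
        simp only [mem_bind_pfun] at hy ⊢
        obtain ⟨z, hz, hy⟩ := hy
        exact ⟨z, hGs _ hσ _ _ hz, hFs _ hσ _ _ hy⟩
      · intro n y hy
        simp only [mem_bind_pfun] at hy
        obtain ⟨z, hz, hy⟩ := hy
        obtain ⟨σ1, hσ1, hz1⟩ := hGw _ _ hz
        obtain ⟨σ2, hσ2, hy2⟩ := hFw _ _ hy
        obtain ⟨ρ, hρ, l1, l2⟩ := prefixOf_union hσ1 hσ2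
        refine ⟨ρ, hρ, ?_⟩
        simp only [mem_bind_pfun]
        exact ⟨z, hGm _ _ l1 _ _ hz1, hFm _ _ l2 _ _ hy2⟩
  | @prec f g _ _ ihf ihg =>
      obtain ⟨F, hFc, hFm, hFs, hFw⟩ := ihf
      obtain ⟨G, hGc, hGm, hGs, hGw⟩ := ihg
      set recF : List Bool → ℕ → ℕ → Part ℕ := fun σ a k =>
        k.rec (F σ a) fun y IH => IH.bind fun i => G σ (Nat.pair a (Nat.pair y i)) with hrecF
      have mono : ∀ σ τ, σ <+: τ → ∀ a k y, y ∈ recF σ a k → y ∈ recF τ a k := by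
        intro σ τ hp a k
        induction k with
        | zero => exact fun y hy => hFm _ _ hp _ _ hy
        | succ k ih =>
            intro y hy
            simp only [hrecF, Part.mem_bind_iff] at hy ⊢
            obtain ⟨i, hi, hy⟩ := hy
            exact ⟨i, ih _ hi, hGm _ _ hp _ _ hy⟩
      have sound : ∀ σ, PrefixOf σ X → ∀ a k y, y ∈ recF σ a k →
          y ∈ (Nat.rec (f a) (fun y IH => IH.bind fun i => g (Nat.pair a (Nat.pair y i))) k : Part ℕ) := by
        intro σ hσ a k
        induction k with
        | zero => exact fun y hy => hFs _ hσ _ _ hy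
        | succ k ih =>
            intro y hy
            simp only [hrecF, Part.mem_bind_iff] at hy ⊢
            obtain ⟨i, hi, hy⟩ := hy
            exact ⟨i, ih _ hi, hGs _ hσ _ _ hy⟩
      have compl : ∀ a k y,
          y ∈ (Nat.rec (f a) (fun y IH => IH.bind fun i => g (Nat.pair a (Nat.pair y i))) k : Part ℕ) →
          ∃ σ, PrefixOf σ X ∧ y ∈ recF σ a k := by
        intro a k
        induction k with
        | zero => exact fun y hy => hFw _ _ hy
        | succ k ih =>
            intro y hy
            simp only [Part.mem_bind_iff] at hy
            obtain ⟨i, hi, hy⟩ := hy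
            obtain ⟨σ1, hσ1, h1⟩ := ih _ hi
            obtain ⟨σ2, hσ2, h2⟩ := hGw _ _ hy
            obtain ⟨ρ, hρ, l1, l2⟩ := prefixOf_union hσ1 hσ2
            refine ⟨ρ, hρ, ?_⟩
            simp only [hrecF, Part.mem_bind_iff]
            exact ⟨i, mono _ _ l1 _ _ _ h1, hGm _ _ l2 _ _ h2⟩
      refine ⟨fun σ => Nat.unpaired fun a n => recF σ a n, ?_, ?_, ?_, ?_⟩
      · have hh : Partrec₂ fun (p : List Bool × ℕ) (q : ℕ × ℕ) =>
            G p.1 (Nat.pair p.2.unpair.1 (Nat.pair q.1 q.2)) :=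
          Partrec₂.comp hGc (Computable.fst.comp Computable.fst)
            (Primrec₂.natPair.to_comp.comp
              (Computable.fst.comp (Computable.unpair.comp (Computable.snd.comp Computable.fst)))
              (Primrec₂.natPair.to_comp.comp (Computable.fst.comp Computable.snd)
                (Computable.snd.comp Computable.snd)))
        have := Partrec.nat_rec
          (f := fun p : List Bool × ℕ => p.2.unpair.2)
          (g := fun p : List Bool × ℕ => F p.1 p.2.unpair.1)
          (Computable.snd.comp (Computable.unpair.comp Computable.snd))
          (Partrec₂.comp hFc Computable.fst
            (Computable.fst.comp (Computable.unpair.comp Computable.snd)))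
          hh
        exact this.of_eq fun p => by simp [hrecF, Nat.unpaired]
      · intro σ τ hp m y hy
        exact mono _ _ hp m.unpair.1 m.unpair.2 y hy
      · intro σ hσ m y hy
        exact sound _ hσ m.unpair.1 m.unpair.2 y hy
      · intro m y hy
        exact compl m.unpair.1 m.unpair.2 y hy
  | @rfind f _ ihf =>
      obtain ⟨F, hFc, hFm, hFs, hFw⟩ := ihf
      refine ⟨fun σ a => Nat.rfind fun n => (fun m => m = 0) <$> F σ (Nat.pair a n), ?_, ?_, ?_, ?_⟩
      · have hp : Partrec₂ fun (p : List Bool × ℕ) (n : ℕ) =>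
            ((F p.1 (Nat.pair p.2 n)).map fun m => decide (m = 0) : Part Bool) :=
          Partrec.map
            (Partrec₂.comp hFc (Computable.fst.comp Computable.fst)
              (Primrec₂.natPair.to_comp.comp (Computable.snd.comp Computable.fst)
                Computable.snd))
            ((Primrec.eq.comp Primrec.snd (Primrec.const 0)).decide.to_comp)
        exact (Partrec.rfind hp).of_eq fun p => by simp [Part.map_eq_map]
      · intro σ τ hp a y hy
        replace hy := Nat.mem_rfind.mp hy; refine Nat.mem_rfind.mpr ?_
        obtain ⟨h1, h2⟩ := hy
        constructor
        · simp only [Part.map_eq_map, Part.mem_map_iff] at h1 ⊢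
          obtain ⟨v, hv, e⟩ := h1
          exact ⟨v, hFm _ _ hp _ _ hv, e⟩
        · intro m hm
          have h := h2 hm
          simp only [Part.map_eq_map, Part.mem_map_iff] at h ⊢
          obtain ⟨v, hv, e⟩ := h
          exact ⟨v, hFm _ _ hp _ _ hv, e⟩
      · intro σ hσ a y hy
        replace hy := Nat.mem_rfind.mp hy; refine Nat.mem_rfind.mpr ?_
        obtain ⟨h1, h2⟩ := hy
        constructor
        · simp only [Part.map_eq_map, Part.mem_map_iff] at h1 ⊢
          obtain ⟨v, hv, e⟩ := h1
          exact ⟨v, hFs _ hσ _ _ hv, e⟩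
        · intro m hm
          have h := h2 hm
          simp only [Part.map_eq_map, Part.mem_map_iff] at h ⊢
          obtain ⟨v, hv, e⟩ := h
          exact ⟨v, hFs _ hσ _ _ hv, e⟩
      · intro a y hy
        replace hy := Nat.mem_rfind.mp hy
        obtain ⟨h1, h2⟩ := hy
        have hex : ∀ m, ∃ σ, m ≤ y → PrefixOf σ X ∧
            ∀ b : Bool, b ∈ ((fun m => decide (m = 0)) <$> f (Nat.pair a m)) →
              b ∈ ((fun m => decide (m = 0)) <$> F σ (Nat.pair a m)) := by
          intro m
          by_cases hm : m ≤ y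
          · have hb : ∃ v, v ∈ f (Nat.pair a m) := by
              rcases lt_or_eq_of_le hm with h | h
              · obtain ⟨v, hv, -⟩ := (Part.map_eq_map _ _ ▸ Part.mem_map_iff _ |>.mp (h2 h))
                exact ⟨v, hv⟩
              · subst h
                obtain ⟨v, hv, -⟩ := (Part.map_eq_map _ _ ▸ Part.mem_map_iff _ |>.mp h1)
                exact ⟨v, hv⟩
            obtain ⟨v, hv⟩ := hb
            obtain ⟨σ, hσ, hvσ⟩ := hFw _ _ hv
            refine ⟨σ, fun _ => ⟨hσ, ?_⟩⟩
            intro b hbmem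
            rw [Part.map_eq_map, Part.mem_map_iff] at hbmem ⊢
            obtain ⟨v', hv', rfl⟩ := hbmem
            have : v' = v := Part.mem_unique hv' hv
            subst this
            exact ⟨v', hvσ, rfl⟩
          · exact ⟨[], fun h => absurd h hm⟩
        choose s hs using hex
        obtain ⟨ρ, hρ, hchain⟩ := prefixOf_chain_max s y (fun m hm => (hs m hm).1)
        refine ⟨ρ, hρ, ?_⟩
        refine Nat.mem_rfind.mpr ?_
        constructor
        · have := (hs y le_rfl).2 true h1
          simp only [Part.map_eq_map, Part.mem_map_iff] at this ⊢
          obtain ⟨v, hv, e⟩ := this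
          exact ⟨v, hFm _ _ (hchain y le_rfl) _ _ hv, e⟩
        · intro m hm
          have := (hs m (le_of_lt hm)).2 false (h2 hm)
          simp only [Part.map_eq_map, Part.mem_map_iff] at this ⊢
          obtain ⟨v, hv, e⟩ := this
          exact ⟨v, hFm _ _ (hchain m (le_of_lt hm)) _ _ hv, e⟩

open Nat.Partrec (Code) in
open Nat.Partrec.Code in
theorem stmt0 (X : Set ℕ) (hX : OneGeneric X) (A B : ℕ → Set ℕ)
    (hA : UnifCE A) (hB : UnifCE B)
    (f : ℕ → ℕ) (hf : OracleRecursiveIn (chi X) ↑f)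
    (hsel : ∀ i, f i ∈ A i \ B i) :
    ∃ g : ℕ → ℕ, Computable g ∧ ∀ i, g i ∈ A i \ B i := by
  obtain ⟨a, ha, hAmem⟩ := hA
  obtain ⟨b, hb, hBmem⟩ := hB
  obtain ⟨F, hFc, hFm, hFs, hFw⟩ := use_lemma X hf
  -- a code for the `F` functional on encoded strings
  have hF' : Partrec (fun m : ℕ =>
      (Encodable.decode (α := List Bool) m.unpair.1 : Part (List Bool)).bind
        fun σ => F σ m.unpair.2) := by
    apply Partrec.bind
    · exact Computable.ofOption
        (Computable.decode.comp (Computable.fst.comp Computable.unpair))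
    · exact Partrec₂.comp hFc Computable.snd
        (Computable.snd.comp (Computable.unpair.comp Computable.fst))
  obtain ⟨cF, hcF⟩ := exists_code.mp (Partrec.nat_iff.mp hF')
  obtain ⟨ca, hca⟩ := exists_code.mp ha
  obtain ⟨cb, hcb⟩ := exists_code.mp hb
  have memF : ∀ (σ : List Bool) (i y : ℕ),
      y ∈ F σ i ↔ y ∈ eval cF (Nat.pair (Encodable.encode σ) i) := by
    intro σ i y
    rw [hcF]
    simp [Part.mem_bind_iff]
  -- the c.e. set of "bad" strings
  set bcheck : List Bool → ℕ → Bool := fun σ n =>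
    cond (decide (evaln n.unpair.1 cF
        (Nat.pair (Encodable.encode σ) n.unpair.2.unpair.1) = some n.unpair.2.unpair.2))
      (evaln n.unpair.1 cb (Nat.pair n.unpair.2.unpair.1 n.unpair.2.unpair.2)).isSome
      false with hbcheck
  have hbc : Computable₂ bcheck := by
    have u1 : Primrec fun p : List Bool × ℕ => p.2.unpair.1 :=
      (Primrec.fst.comp (Primrec.unpair.comp Primrec.snd))
    have u2 : Primrec fun p : List Bool × ℕ => p.2.unpair.2.unpair.1 :=
      (Primrec.fst.comp (Primrec.unpair.comp (Primrec.snd.comp (Primrec.unpair.comp Primrec.snd))))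
    have u3 : Primrec fun p : List Bool × ℕ => p.2.unpair.2.unpair.2 :=
      (Primrec.snd.comp (Primrec.unpair.comp (Primrec.snd.comp (Primrec.unpair.comp Primrec.snd))))
    have e1 : Primrec fun p : List Bool × ℕ =>
        evaln p.2.unpair.1 cF (Nat.pair (Encodable.encode p.1) p.2.unpair.2.unpair.1) :=
      primrec_evaln.comp (((u1.pair (Primrec.const cF)).pair
        (Primrec₂.natPair.comp (Primrec.encode.comp Primrec.fst) u2)))
    have e2 : Primrec fun p : List Bool × ℕ =>
        evaln p.2.unpair.1 cb (Nat.pair p.2.unpair.2.unpair.1 p.2.unpair.2.unpair.2) :=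
      primrec_evaln.comp (((u1.pair (Primrec.const cb)).pair (Primrec₂.natPair.comp u2 u3)))
    have d1 : Primrec fun p : List Bool × ℕ =>
        decide (evaln p.2.unpair.1 cF
          (Nat.pair (Encodable.encode p.1) p.2.unpair.2.unpair.1) = some p.2.unpair.2.unpair.2) :=
      (Primrec.eq.comp e1 (Primrec.option_some.comp u3)).decide
    exact Computable.cond d1.to_comp (Primrec.option_isSome.comp e2).to_comp
      (Computable.const false)
  set W : Set (List Bool) := {σ | ∃ n, bcheck σ n = true} with hW
  -- W is c.e.
  have hWce : CEString W := by
    refine ⟨fun e => (Encodable.decode (α := List Bool) e : Part (List Bool)).bind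
      fun σ => Nat.rfind fun n => Part.some (bcheck σ n), ?_, ?_⟩
    · refine Partrec.nat_iff.mp ?_
      apply Partrec.bind
      · exact Computable.ofOption Computable.decode
      · have : Partrec₂ fun (q : ℕ × List Bool) (n : ℕ) => (Part.some (bcheck q.2 n) : Part Bool) :=
          (hbc.comp (Computable.snd.comp Computable.fst) Computable.snd).partrec
        exact Partrec.rfind this
    · intro σ
      constructor
      · rintro ⟨n, hn⟩
        refine Part.dom_iff_mem.mpr ?_
        have : (Nat.rfind fun n => Part.some (bcheck σ n)).Dom := by
          refine Nat.rfind_dom.mpr ?_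
          exact ⟨n, by simpa using hn, fun {m} _ => trivial⟩
        obtain ⟨k, hk⟩ := Part.dom_iff_mem.mp this
        refine ⟨k, ?_⟩
        rw [Part.mem_bind_iff]
        exact ⟨σ, by simp [Encodable.encodek], hk⟩
      · intro hdom
        obtain ⟨k, hk⟩ := Part.dom_iff_mem.mp hdom
        rw [Part.mem_bind_iff] at hk
        obtain ⟨σ', hσ', hk⟩ := hk
        have : σ' = σ := by simpa [Encodable.encodek] using hσ'
        subst this
        have := Nat.rfind_spec hk
        exact ⟨k, by simpa using this⟩
  -- unpack membership in W
  have memW : ∀ σ : List Bool, σ ∈ W ↔ ∃ i y, y ∈ F σ i ∧ y ∈ B i := by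
    intro σ
    constructor
    · rintro ⟨n, hn⟩
      rw [hbcheck] at hn
      simp only at hn
      rcases h1 : decide (evaln n.unpair.1 cF
          (Nat.pair (Encodable.encode σ) n.unpair.2.unpair.1) = some n.unpair.2.unpair.2) with _ | _
      · rw [h1] at hn; simp at hn
      · rw [h1] at hn
        simp only [cond_true] at hn
        have heq := of_decide_eq_true h1
        have hy : n.unpair.2.unpair.2 ∈ F σ n.unpair.2.unpair.1 :=
          (memF _ _ _).mpr (evaln_sound heq)
        obtain ⟨z, hz⟩ := Option.isSome_iff_exists.mp hn
        have hzb : z ∈ b (Nat.pair n.unpair.2.unpair.1 n.unpair.2.unpair.2) := by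
          rw [← hcb]; exact evaln_sound hz
        exact ⟨n.unpair.2.unpair.1, n.unpair.2.unpair.2, hy,
          (hBmem _ _).mpr (Part.dom_iff_mem.mpr ⟨z, hzb⟩)⟩
    · rintro ⟨i, y, hy, hyB⟩
      obtain ⟨s1, hs1⟩ := evaln_complete.mp ((memF _ _ _).mp hy)
      obtain ⟨z, hz⟩ := Part.dom_iff_mem.mp ((hBmem _ _).mp hyB)
      rw [← hcb] at hz
      obtain ⟨s2, hs2⟩ := evaln_complete.mp hz
      refine ⟨Nat.pair (max s1 s2) (Nat.pair i y), ?_⟩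
      rw [hbcheck]
      simp only [Nat.unpair_pair]
      rw [decide_eq_true (Option.mem_def.mp (evaln_mono (le_max_left s1 s2) hs1))]
      simp only [cond_true]
      exact Option.isSome_iff_exists.mpr ⟨z, evaln_mono (le_max_right s1 s2) hs2⟩
  -- apply genericity
  obtain ⟨σ0, hσ0X, hdic⟩ := hX W hWce
  have hno : ∀ τ, σ0 <+: τ → τ ∉ W := by
    rcases hdic with hin | hno
    · exfalso
      obtain ⟨i, y, hy, hyB⟩ := (memW σ0).mp hin
      have : y ∈ (↑f : ℕ →. ℕ) i := hFs _ hσ0X _ _ hy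
      rw [PFun.coe_val, Part.mem_some_iff] at this
      exact (hsel i).2 (this ▸ hyB)
    · exact hno
  -- the computable search
  set gcheck : ℕ → ℕ → Option ℕ := fun i n =>
    (Encodable.decode (α := List Bool) n.unpair.1).bind fun t =>
      (evaln n.unpair.2 cF (Nat.pair (Encodable.encode (σ0 ++ t)) i)).bind fun y =>
        cond (evaln n.unpair.2 ca (Nat.pair i y)).isSome (some y) none with hgcheck
  have hgc : Computable₂ gcheck := by
    have hdec : Computable fun p : ℕ × ℕ => Encodable.decode (α := List Bool) p.2.unpair.1 :=
      Computable.decode.comp (Computable.fst.comp (Computable.unpair.comp Computable.snd))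
    have hev1 : Computable fun q : (ℕ × ℕ) × List Bool =>
        evaln q.1.2.unpair.2 cF (Nat.pair (Encodable.encode (σ0 ++ q.2)) q.1.1) := by
      have harg : Computable fun q : (ℕ × ℕ) × List Bool =>
          ((q.1.2.unpair.2, cF), Nat.pair (Encodable.encode (σ0 ++ q.2)) q.1.1) :=
        Computable.pair (Computable.pair
            (Computable.snd.comp (Computable.unpair.comp (Computable.snd.comp Computable.fst)))
            (Computable.const cF))
          (Primrec₂.natPair.to_comp.comp
            (Computable.encode.comp
              (Computable.list_append.comp (Computable.const σ0) Computable.snd))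
            (Computable.fst.comp Computable.fst))
      exact Computable.comp
        (f := fun a : (ℕ × Nat.Partrec.Code) × ℕ => evaln a.1.1 a.1.2 a.2)
        (g := fun q : (ℕ × ℕ) × List Bool =>
          ((q.1.2.unpair.2, cF), Nat.pair (Encodable.encode (σ0 ++ q.2)) q.1.1))
        primrec_evaln.to_comp harg
    have hev2 : Computable fun r : ((ℕ × ℕ) × List Bool) × ℕ =>
        (evaln r.1.1.2.unpair.2 ca (Nat.pair r.1.1.1 r.2)).isSome := by
      have p0 : Computable fun r : ((ℕ × ℕ) × List Bool) × ℕ => r.1.1 :=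
        Computable.fst.comp Computable.fst
      have harg : Computable fun r : ((ℕ × ℕ) × List Bool) × ℕ =>
          ((r.1.1.2.unpair.2, ca), Nat.pair r.1.1.1 r.2) :=
        Computable.pair (Computable.pair
            (Computable.snd.comp (Computable.unpair.comp (Computable.snd.comp p0)))
            (Computable.const ca))
          (Primrec₂.natPair.to_comp.comp (Computable.fst.comp p0) Computable.snd)
      have h2 : Computable fun r : ((ℕ × ℕ) × List Bool) × ℕ =>
          evaln r.1.1.2.unpair.2 ca (Nat.pair r.1.1.1 r.2) :=
        Computable.comp
          (f := fun a : (ℕ × Nat.Partrec.Code) × ℕ => evaln a.1.1 a.1.2 a.2)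
          (g := fun r : ((ℕ × ℕ) × List Bool) × ℕ =>
            ((r.1.1.2.unpair.2, ca), Nat.pair r.1.1.1 r.2))
          primrec_evaln.to_comp harg
      exact Computable.comp (f := Option.isSome (α := ℕ))
        (g := fun r : ((ℕ × ℕ) × List Bool) × ℕ =>
          evaln r.1.1.2.unpair.2 ca (Nat.pair r.1.1.1 r.2))
        Primrec.option_isSome.to_comp h2
    have inner2 : Computable₂ fun (q : (ℕ × ℕ) × List Bool) (y : ℕ) =>
        cond (evaln q.1.2.unpair.2 ca (Nat.pair q.1.1 y)).isSome (some y) none :=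
      Computable.cond hev2 (Computable.option_some.comp Computable.snd)
        (Computable.const none)
    have inner1 : Computable₂ fun (p : ℕ × ℕ) (t : List Bool) =>
        (evaln p.2.unpair.2 cF (Nat.pair (Encodable.encode (σ0 ++ t)) p.1)).bind fun y =>
          cond (evaln p.2.unpair.2 ca (Nat.pair p.1 y)).isSome (some y) none :=
      Computable.option_bind hev1 inner2
    exact Computable.option_bind hdec inner1
  have hpart : Partrec fun i => Nat.rfindOpt (gcheck i) := Partrec.rfindOpt hgc
  -- any output of the search is a valid selector value
  have hvalid : ∀ i y, y ∈ Nat.rfindOpt (gcheck i) → y ∈ A i \ B i := by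
    intro i y hy
    obtain ⟨n, hn⟩ := Nat.rfindOpt_spec hy
    rw [hgcheck] at hn
    simp only [Option.mem_def, Option.bind_eq_some_iff] at hn
    obtain ⟨t, ht, hn⟩ := hn
    obtain ⟨y', hy', hn⟩ := hn
    rcases hcond : (evaln n.unpair.2 ca (Nat.pair i y')).isSome with _ | _
    · rw [hcond] at hn; simp at hn
    · rw [hcond] at hn
      simp only [cond_true, Option.some_inj] at hn
      have hyF : y' ∈ F (σ0 ++ t) i := (memF _ _ _).mpr (evaln_sound hy')
      obtain ⟨z, hz⟩ := Option.isSome_iff_exists.mp hcond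
      have hza : z ∈ a (Nat.pair i y') := by rw [← hca]; exact evaln_sound hz
      rw [← hn]
      constructor
      · exact (hAmem _ _).mpr (Part.dom_iff_mem.mpr ⟨z, hza⟩)
      · intro hyB
        exact hno (σ0 ++ t) (List.prefix_append σ0 t)
          ((memW _).mpr ⟨i, y', hyF, hyB⟩)
  -- the search always succeeds
  have hdomall : ∀ i, (Nat.rfindOpt (gcheck i)).Dom := by
    intro i
    rw [Nat.rfindOpt_dom]
    have hfi : f i ∈ (↑f : ℕ →. ℕ) i := by simp [PFun.coe_val]
    obtain ⟨σ, hσX, hσ⟩ := hFw i (f i) hfi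
    obtain ⟨ρ, hρX, hl0, hl⟩ := prefixOf_union hσ0X hσX
    obtain ⟨t, rfl⟩ := hl0
    have hFρ : f i ∈ F (σ0 ++ t) i := hFm _ _ hl _ _ hσ
    obtain ⟨s1, hs1⟩ := evaln_complete.mp ((memF _ _ _).mp hFρ)
    have hfiA : (a (Nat.pair i (f i))).Dom := (hAmem _ _).mp (hsel i).1
    obtain ⟨z, hz⟩ := Part.dom_iff_mem.mp hfiA
    rw [← hca] at hz
    obtain ⟨s2, hs2⟩ := evaln_complete.mp hz
    refine ⟨Nat.pair (Encodable.encode t) (max s1 s2), f i, ?_⟩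
    rw [hgcheck]
    simp only [Option.mem_def, Nat.unpair_pair, Encodable.encodek, Option.bind_some]
    rw [evaln_mono (le_max_left s1 s2) hs1]
    simp only [Option.bind_some]
    rw [Option.isSome_iff_exists.mpr ⟨z, evaln_mono (le_max_right s1 s2) hs2⟩]
    rfl
  -- assemble g
  refine ⟨fun i => (Nat.rfindOpt (gcheck i)).get (hdomall i), ?_, ?_⟩
  · exact Partrec.of_eq_tot hpart fun i => Part.get_mem (hdomall i)
  · intro i
    exact hvalid i _ (Part.get_mem (hdomall i))
end

section
/- Let A = rng(a) and V = rng(v) be infinite c.e. sets, where a and v are injective computable functions. Define the c.e. set A^V = {v(s) : ∃t > s, a(t) < v(s)}. Then A^V ⊆ V, and for every set X ⊆ ℕ, if A^V ⊆* X (i.e., A^V \ X is finite), then either V ⊆* X or A is Turing reducible to X. -/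
/-- The Dekker-style subset `A^V` built from enumerations `a` of `A` and `v` of `V`. -/
def DekkerOp (a v : ℕ → ℕ) : Set ℕ := {n | ∃ s, n = v s ∧ ∃ t > s, a t < v s}

namespace OracleRecursiveIn

lemma of_eq' {O : ℕ → ℕ} {f g : ℕ →. ℕ} (h : OracleRecursiveIn O f) (e : ∀ n, f n = g n) :
    OracleRecursiveIn O g := (funext e : f = g) ▸ h

lemma of_partrec {O : ℕ → ℕ} {f : ℕ →. ℕ} (h : Nat.Partrec f) : OracleRecursiveIn O f := by
  induction h with
  | zero => exact .zero
  | succ => exact .succ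
  | left => exact .left
  | right => exact .right
  | pair _ _ ih1 ih2 => exact .pair ih1 ih2
  | comp _ _ ih1 ih2 => exact .comp ih1 ih2
  | prec _ _ ih1 ih2 => exact .prec ih1 ih2
  | rfind _ ih => exact .rfind ih

lemma of_computable {O : ℕ → ℕ} {f : ℕ → ℕ} (h : Computable f) : OracleRecursiveIn O ↑f :=
  of_partrec (Partrec.nat_iff.1 h)

lemma totalComp {O : ℕ → ℕ} {f g : ℕ → ℕ} (hf : OracleRecursiveIn O ↑f) (hg : OracleRecursiveIn O ↑g) :
    OracleRecursiveIn O ↑(fun n => f (g n)) :=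
  (hf.comp hg).of_eq' fun n => by exact Part.bind_some _ _

lemma totalPair {O : ℕ → ℕ} {f g : ℕ → ℕ} (hf : OracleRecursiveIn O ↑f) (hg : OracleRecursiveIn O ↑g) :
    OracleRecursiveIn O ↑(fun n => Nat.pair (f n) (g n)) :=
  (hf.pair hg).of_eq' fun n => by simp [PFun.coe_val, Seq.seq]

end OracleRecursiveIn

lemma chi_eq_zero {X : Set ℕ} {n : ℕ} (h : n ∉ X) : chi X n = 0 := by
  simp [chi, h]

lemma chi_eq_zero_iff {X : Set ℕ} {n : ℕ} : chi X n = 0 ↔ n ∉ X := by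
  by_cases h : n ∈ X <;> simp [chi, h]

theorem stmt1 (a v : ℕ → ℕ) (ha : Computable a) (hv : Computable v)
    (hainj : Function.Injective a) (hvinj : Function.Injective v)
    (hAinf : (Set.range a).Infinite) (hVinf : (Set.range v).Infinite) :
    DekkerOp a v ⊆ Set.range v ∧
      ∀ X : Set ℕ, (DekkerOp a v \ X).Finite →
        (Set.range v \ X).Finite ∨ SetTuringRed (Set.range a) X := by
  constructor
  · rintro n ⟨s, hns, -⟩
    exact ⟨s, hns.symm⟩
  intro X hfin
  by_cases hVX : (Set.range v \ X).Finite
  · exact Or.inl hVX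
  right
  -- ** setup **
  set O : ℕ → ℕ := chi X with hOdef
  -- the finitely many bad stages
  have hE : (v ⁻¹' (DekkerOp a v \ X)).Finite := hfin.preimage hvinj.injOn
  obtain ⟨s₀, hs₀⟩ : ∃ s₀, ∀ s ∈ v ⁻¹' (DekkerOp a v \ X), s < s₀ := by
    obtain ⟨b, hb⟩ := hE.bddAbove
    exact ⟨b + 1, fun s hs => Nat.lt_succ_of_le (hb hs)⟩
  -- key: good stages give a bound on later a-values
  have key : ∀ s, s₀ ≤ s → v s ∉ X → ∀ t, s < t → v s ≤ a t := by
    intro s hs hvs t hst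
    by_contra hlt
    push_neg at hlt
    have hmem : v s ∈ DekkerOp a v := ⟨s, rfl, t, hst, hlt⟩
    exact absurd (hs₀ s ⟨hmem, hvs⟩) (not_lt.2 hs)
  -- there are infinitely many good stages
  have hPinf : {s | v s ∉ X}.Infinite := by
    intro hfin'
    apply hVX
    have hsub : Set.range v \ X ⊆ v '' {s | v s ∉ X} := by
      rintro x ⟨⟨s, rfl⟩, hx⟩
      exact ⟨s, hx, rfl⟩
    exact (hfin'.image v).subset hsub
  have hGinf : {s | s₀ ≤ s ∧ v s ∉ X}.Infinite := by
    have : {s | s₀ ≤ s ∧ v s ∉ X} = {s | v s ∉ X} \ {s | s < s₀} := by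
      ext s; simp [not_lt, and_comm]
    rw [this]
    exact hPinf.diff (Set.finite_lt_nat s₀)
  have hex : ∀ n, ∃ s, s₀ ≤ s ∧ n < v s ∧ v s ∉ X := by
    intro n
    obtain ⟨b, ⟨s, hs, rfl⟩, hnb⟩ :=
      (hGinf.image (hvinj.injOn)).exists_gt n
    exact ⟨s, hs.1, hnb, hs.2⟩
  -- ** the algorithm **
  set e1 : ℕ → ℕ := fun k =>
    if s₀ ≤ k.unpair.1.unpair.2 ∧ k.unpair.1.unpair.1 < k.unpair.2.unpair.1
    then k.unpair.2.unpair.2 else 1 with he1def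
  set g1 : ℕ → ℕ :=
    fun m => e1 (Nat.pair m (Nat.pair (v m.unpair.2) (O (v m.unpair.2)))) with hg1def
  set e2 : ℕ → ℕ := fun k =>
    if k.unpair.2 = k.unpair.1.unpair.1.unpair.1 ∨ k.unpair.1.unpair.1.unpair.2 < k.unpair.1.unpair.2
    then 0 else 1 with he2def
  set g2 : ℕ → ℕ := fun m => e2 (Nat.pair m (a m.unpair.2)) with hg2def
  set e4 : ℕ → ℕ := fun k => if k.unpair.2 ≤ k.unpair.1.unpair.2 then 1 else 0 with he4def
  have pu1 : Primrec fun n : ℕ => n.unpair.1 := Primrec.fst.comp Primrec.unpair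
  have pu2 : Primrec fun n : ℕ => n.unpair.2 := Primrec.snd.comp Primrec.unpair
  have he1 : Primrec e1 :=
    Primrec.ite
      ((Primrec.nat_le.comp (Primrec.const s₀) (pu2.comp pu1)).and
        (Primrec.nat_lt.comp (pu1.comp pu1) (pu1.comp pu2)))
      (pu2.comp pu2) (Primrec.const 1)
  have he2 : Primrec e2 :=
    Primrec.ite
      ((Primrec.eq.comp pu2 (pu1.comp (pu1.comp pu1))).or
        (Primrec.nat_lt.comp (pu2.comp (pu1.comp pu1)) (pu2.comp pu1)))
      (Primrec.const 0) (Primrec.const 1)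
  have he4 : Primrec e4 :=
    Primrec.ite (Primrec.nat_le.comp pu2 (pu2.comp pu1)) (Primrec.const 1) (Primrec.const 0)
  have hvu : Computable fun m : ℕ => v m.unpair.2 := hv.comp pu2.to_comp
  have hOvu : OracleRecursiveIn O ↑(fun m : ℕ => O (v m.unpair.2)) :=
    OracleRecursiveIn.oracle.totalComp (.of_computable hvu)
  have hinner : OracleRecursiveIn O
      ↑(fun m : ℕ => Nat.pair m (Nat.pair (v m.unpair.2) (O (v m.unpair.2)))) :=
    (OracleRecursiveIn.of_computable Computable.id).totalPair
      ((OracleRecursiveIn.of_computable hvu).totalPair hOvu)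
  have hg1 : OracleRecursiveIn O ↑g1 :=
    (OracleRecursiveIn.of_computable he1.to_comp).totalComp hinner
  have hg2c : Computable g2 :=
    he2.to_comp.comp
      (Primrec₂.natPair.to_comp.comp Computable.id (ha.comp pu2.to_comp))
  have hid : OracleRecursiveIn O ↑(id : ℕ → ℕ) := .of_computable Computable.id
  have hR1 := OracleRecursiveIn.rfind hg1
  have hR2 := OracleRecursiveIn.rfind (OracleRecursiveIn.of_computable (O := O) hg2c)
  have hF := OracleRecursiveIn.comp
    (OracleRecursiveIn.comp (OracleRecursiveIn.of_computable he4.to_comp) (hid.pair hR2))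
    (hid.pair hR1)
  -- ** correctness **
  show OracleRecursiveIn O ↑(chi (Set.range a))
  apply hF.of_eq'
  intro n
  -- stage-1 search terminates
  obtain ⟨s, hs⟩ := hex n
  have hg1val : ∀ m s', (g1 (Nat.pair m s') = 0) ↔ (s₀ ≤ s' ∧ m < v s' ∧ v s' ∉ X) := by
    intro m s'
    simp only [hg1def, he1def, Nat.unpair_pair]
    by_cases hc : s₀ ≤ s' ∧ m < v s'
    · rw [if_pos hc, chi_eq_zero_iff]
      exact ⟨fun h => ⟨hc.1, hc.2, h⟩, fun h => h.2.2⟩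
    · rw [if_neg hc]
      exact iff_of_false one_ne_zero (fun h => hc ⟨h.1, h.2.1⟩)
  have hdom1 : (Nat.rfind fun s' => (fun m => m = 0) <$> (↑g1 : ℕ →. ℕ) (Nat.pair n s')).Dom := by
    apply Nat.rfind_dom.2
    refine ⟨s, ?_, fun {m} _ => by simp [PFun.coe_val]⟩
    simp [PFun.coe_val]
    exact (hg1val n s).2 ⟨hs.1, hs.2.1, hs.2.2⟩
  obtain ⟨s₁, hmem1⟩ := Part.dom_iff_mem.mp hdom1
  have hspec1 : g1 (Nat.pair n s₁) = 0 := by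
    have := Nat.rfind_spec hmem1
    simpa [PFun.coe_val] using this
  obtain ⟨hs₁a, hs₁b, hs₁c⟩ := (hg1val n s₁).1 hspec1
  -- stage-2 search terminates
  have hg2val : ∀ w t, (g2 (Nat.pair w t) = 0) ↔ (a t = w.unpair.1 ∨ w.unpair.2 < t) := by
    intro w t
    simp only [hg2def, he2def, Nat.unpair_pair]
    by_cases hc : a t = w.unpair.1 ∨ w.unpair.2 < t
    · rw [if_pos hc]; exact iff_of_true rfl hc
    · rw [if_neg hc]; exact iff_of_false one_ne_zero hc
  set w : ℕ := Nat.pair n s₁ with hwdef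
  have hdom2 : (Nat.rfind fun t => (fun m => m = 0) <$> (↑g2 : ℕ →. ℕ) (Nat.pair w t)).Dom := by
    apply Nat.rfind_dom.2
    refine ⟨s₁ + 1, ?_, fun {m} _ => by simp [PFun.coe_val]⟩
    simp [PFun.coe_val]
    apply (hg2val w (s₁+1)).2
    right
    simp [hwdef]
  obtain ⟨t₁, hmem2⟩ := Part.dom_iff_mem.mp hdom2
  have hspec2 : a t₁ = n ∨ s₁ < t₁ := by
    have := Nat.rfind_spec hmem2
    simp [PFun.coe_val] at this
    have := (hg2val w t₁).1 this
    simpa [hwdef] using this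
  have hmin2 : ∀ m, m < t₁ → ¬(a m = n ∨ s₁ < m) := by
    intro m hm
    have := Nat.rfind_min hmem2 hm
    simp [PFun.coe_val] at this
    intro hc
    exact this ((hg2val w m).2 (by simpa [hwdef] using hc))
  -- final value analysis
  have hval : chi (Set.range a) n = if t₁ ≤ s₁ then 1 else 0 := by
    by_cases hts : t₁ ≤ s₁
    · rw [if_pos hts]
      have hat : a t₁ = n := hspec2.resolve_right (not_lt.2 hts)
      simp [chi, Set.mem_range.2 ⟨t₁, hat⟩]
    · rw [if_neg hts]
      have hnot : n ∉ Set.range a := by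
        rintro ⟨t, rfl⟩
        by_cases htle : t ≤ s₁
        · exact hmin2 t (lt_of_le_of_lt htle (not_le.1 hts)) (Or.inl rfl)
        · have := key s₁ hs₁a hs₁c t (not_le.1 htle)
          exact absurd this (not_le.2 hs₁b)
      simp [chi, hnot]
  -- put it all together
  have hrw1 : (Nat.rfind fun s' => (fun m => m = 0) <$> (↑g1 : ℕ →. ℕ) (Nat.pair n s'))
      = Part.some s₁ := Part.eq_some_iff.2 hmem1
  have hrw2 : (Nat.rfind fun t => (fun m => m = 0) <$> (↑g2 : ℕ →. ℕ) (Nat.pair w t))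
      = Part.some t₁ := Part.eq_some_iff.2 hmem2
  have hrw1' : (Nat.rfind fun s' => Part.some (decide (g1 (Nat.pair n s') = 0)))
      = Part.some s₁ := by simpa [PFun.coe_val] using hrw1
  have hrw2' : (Nat.rfind fun t => Part.some (decide (g2 (Nat.pair (Nat.pair n s₁) t) = 0)))
      = Part.some t₁ := by simpa [PFun.coe_val, hwdef] using hrw2
  simp only [PFun.coe_val, Seq.seq, Part.bind_eq_bind, Part.map_eq_map, Part.map_some,
    Part.bind_some, id_eq]
  rw [hrw1']
  simp only [Part.map_some, Part.bind_some]
  rw [hrw2']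
  rw [hval]
  rw [Part.map_some]
  refine (Part.bind_some _ _).trans ?_
  simp [PFun.coe_val, he4def]
end
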